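/- Let K be a field of characteristic zero, A a K-algebra (not necessarily unital or commutative), and δ a locally finite K-E-derivation of A. If e is an idempotent of A lying in both the kernel of δ and the image of δ, then both eA = {ea : a ∈ A} and Ae = {ae : a ∈ A} are contained in the image of δ. -/

import Mathlib

open Polynomial in
lemma poly_vanish {K : Type*} [Field K] [CharZero K] (k : ℕ) (c : ℕ → K)
    (h : ∀ N : ℕ, ∑ t ∈ Finset.range k, c t * (N : K) ^ (k - t) = 0) :
    ∀ t < k, c t = 0 := by
  classical
  set p : K[X] := ∑ t ∈ Finset.range k, C (c t) * X ^ (k - t) with hp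
  have heval : ∀ N : ℕ, p.eval (N : K) = 0 := by
    intro N
    rw [hp, Polynomial.eval_finset_sum]
    simpa using h N
  have hp0 : p = 0 := by
    refine Polynomial.eq_zero_of_infinite_isRoot p ?_
    exact Set.infinite_of_injective_forall_mem (f := (Nat.cast : ℕ → K))
      Nat.cast_injective heval
  intro t ht
  have hc : p.coeff (k - t) = c t := by
    rw [hp, Polynomial.finset_sum_coeff]
    rw [Finset.sum_eq_single t]
    · simp
    · intro t' ht' hne
      have ht'' := Finset.mem_range.mp ht'
      simp only [Polynomial.coeff_C_mul, Polynomial.coeff_X_pow]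
      rw [if_neg, mul_zero]
      intro habs
      exact hne (by omega)
    · intro h'
      exact absurd (Finset.mem_range.mpr ht) h'
  rw [hp0, Polynomial.coeff_zero] at hc
  exact hc.symm

section Abstract

variable {K : Type*} [Field K] [CharZero K]
variable {A : Type*} [AddCommGroup A] [Module K A]

lemma abstract_main (Ψ E W : Module.End K A)
    (hEΨ : Ψ * E = E * Ψ)
    (hWΨ : Ψ * W = (W - E) * Ψ)
    (hEW : E * W = W) (hWE : W * E = W)
    (c : A) (hc : E c = c)
    (hfd : FiniteDimensional K (Submodule.span K
      (Set.range fun i : ℕ => (((1 : Module.End K A) - Ψ) ^ i) c))) :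
    c ∈ LinearMap.range ((1 : Module.End K A) - Ψ) := by
  set D : Module.End K A := (1 : Module.End K A) - Ψ with hD
  set M : Submodule K A := LinearMap.range D with hM
  have hDx : ∀ x : A, D x = x - Ψ x := by
    intro x; rw [hD]; simp
  have hMmem : ∀ z : A, D z ∈ M := fun z => LinearMap.mem_range_self D z
  have hΨD : Ψ * D = D * Ψ := by
    rw [hD, mul_sub, sub_mul, mul_one, one_mul]
  have hED : E * D = D * E := by
    rw [hD, mul_sub, sub_mul, mul_one, one_mul, hEΨ]
  have hMΨ : ∀ z ∈ M, Ψ z ∈ M := by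
    rintro z ⟨u, rfl⟩
    refine ⟨Ψ u, ?_⟩
    rw [← Module.End.mul_apply, ← hΨD, Module.End.mul_apply]
  have hMΨpow : ∀ (i : ℕ) (z : A), z ∈ M → (Ψ ^ i) z ∈ M := by
    intro i
    induction i with
    | zero => intro z hz; simpa using hz
    | succ i ih =>
      intro z hz
      rw [pow_succ, Module.End.mul_apply]
      exact ih _ (hMΨ z hz)
  have htel : ∀ (x : A) (N : ℕ), x - (Ψ ^ N) x = ∑ i ∈ Finset.range N, (Ψ ^ i) (D x) := by
    intro x N
    induction N with
    | zero => simp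
    | succ N ih =>
      rw [Finset.sum_range_succ, ← ih, pow_succ, Module.End.mul_apply]
      have h1 : (Ψ ^ N) (D x) = (Ψ ^ N) x - (Ψ ^ N) (Ψ x) := by rw [hDx, map_sub]
      rw [h1]; abel
  have htelM : ∀ (x : A) (N : ℕ), x - (Ψ ^ N) x ∈ M := by
    intro x N
    rw [htel]
    exact Submodule.sum_mem _ fun i _ => hMΨpow i _ (hMmem x)
  have hcomm : Commute Ψ E := hEΨ
  have hEΨpow : ∀ i : ℕ, E * Ψ ^ i = Ψ ^ i * E := fun i => ((hcomm.pow_left i).symm).eq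
  have hWΨ' : W * Ψ = Ψ * W + Ψ * E := by
    have h1 : Ψ * W + E * Ψ = W * Ψ := by rw [hWΨ, sub_mul]; abel
    rw [← h1, hEΨ]
  have hconjW : ∀ i : ℕ, W * Ψ ^ i = Ψ ^ i * (W + (i : K) • E) := by
    intro i
    induction i with
    | zero => simp
    | succ i ih =>
      rw [pow_succ, ← mul_assoc, ih, mul_assoc]
      have h2 : (W + (i : K) • E) * Ψ = Ψ * (W + ((i : K) + 1) • E) := by
        rw [add_mul, hWΨ', smul_mul_assoc, ← hEΨ, mul_add, mul_smul_comm, add_smul, one_smul]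
        abel
      rw [h2, ← mul_assoc, ← pow_succ]
      norm_cast
  have hconjc : ∀ (c' : K) (i : ℕ),
      (W + c' • E) * Ψ ^ i = Ψ ^ i * (W + (c' + (i : K)) • E) := by
    intro c' i
    rw [add_mul, hconjW, smul_mul_assoc, hEΨpow, mul_add, mul_add, mul_smul_comm,
      mul_smul_comm, add_smul]
    abel
  have hconjpow : ∀ (c' : K) (i k : ℕ),
      (W + c' • E) ^ k * Ψ ^ i = Ψ ^ i * (W + (c' + (i : K)) • E) ^ k := by
    intro c' i k
    induction k with
    | zero => simp
    | succ k ih =>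
      rw [pow_succ', mul_assoc, ih, ← mul_assoc, hconjc, mul_assoc, ← pow_succ']
  have hΨWpow : ∀ (N k : ℕ), Ψ ^ N * W ^ k = (W + (-(N : K)) • E) ^ k * Ψ ^ N := by
    intro N k
    rw [hconjpow]
    simp
  have hEpow : ∀ (x : A), E x = x → ∀ j, (E ^ j) x = x := by
    intro x hx j
    induction j with
    | zero => simp
    | succ j ih => rw [pow_succ, Module.End.mul_apply, hx, ih]
  have hbinom : ∀ (c' : K) (k : ℕ) (x : A), E x = x →
      ((W + c' • E) ^ k) x
        = ∑ t ∈ Finset.range (k + 1), (k.choose t) • (c' ^ (k - t) • ((W ^ t) x)) := by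
    intro c' k x hx
    have hcomm2 : Commute W (c' • E) := by
      show W * (c' • E) = (c' • E) * W
      rw [mul_smul_comm, smul_mul_assoc, hWE, hEW]
    rw [hcomm2.add_pow, LinearMap.sum_apply]
    refine Finset.sum_congr rfl ?_
    intro t _
    rw [smul_pow]
    calc (W ^ t * (c' ^ (k - t) • E ^ (k - t)) * ((k.choose t : ℕ) : Module.End K A)) x
        = (W ^ t) ((c' ^ (k - t) • E ^ (k - t)) ((k.choose t) • x)) := rfl
      _ = (W ^ t) (c' ^ (k - t) • (E ^ (k - t)) ((k.choose t) • x)) := by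
          rw [LinearMap.smul_apply]
      _ = (W ^ t) (c' ^ (k - t) • (k.choose t) • (E ^ (k - t)) x) := by rw [map_nsmul]
      _ = (W ^ t) (c' ^ (k - t) • (k.choose t) • x) := by rw [hEpow x hx]
      _ = (k.choose t) • c' ^ (k - t) • (W ^ t) x := by
          rw [map_smul, map_nsmul, smul_comm]
  have hC : ∀ (m : ℕ) (x : A), E x = x → (D ^ m) x = 0 → ∀ k, (W ^ k) x ∈ M := by
    intro m
    induction m with
    | zero =>
      intro x hx h0 k
      have hx0 : x = 0 := by simpa using h0
      simp [hx0]
    | succ m IH =>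
      intro x hx h0 k
      set y : A := D x with hy
      have hEy : E y = y := by
        rw [hy, ← Module.End.mul_apply, hED, Module.End.mul_apply, hx]
      have hDy : (D ^ m) y = 0 := by
        rw [hy, ← Module.End.mul_apply, ← pow_succ, h0]
      have hWy := IH y hEy hDy
      have h1 : ∀ (c'' : K) (k' i : ℕ), ((W + c'' • E) ^ k' * Ψ ^ i) y ∈ M := by
        intro c'' k' i
        rw [hconjpow, Module.End.mul_apply]
        refine hMΨpow i _ ?_
        rw [hbinom _ _ y hEy]
        refine Submodule.sum_mem _ fun t _ => ?_
        rw [← Nat.cast_smul_eq_nsmul K]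
        exact Submodule.smul_mem _ _ (Submodule.smul_mem _ _ (hWy t))
      have h2 : ∀ (N k' : ℕ), (W ^ k') x - ((W + (-(N : K)) • E) ^ k') x ∈ M := by
        intro N k'
        have e1 : (Ψ ^ N) ((W ^ k') x) = ((W + (-(N : K)) • E) ^ k') ((Ψ ^ N) x) := by
          rw [← Module.End.mul_apply, hΨWpow, Module.End.mul_apply]
        have e2 : (Ψ ^ N) x = x - ∑ i ∈ Finset.range N, (Ψ ^ i) y := by
          rw [eq_sub_iff_add_eq, add_comm, ← eq_sub_iff_add_eq]
          exact (htel x N).symm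
        have e3 : (W ^ k') x - ((W + (-(N : K)) • E) ^ k') x
            = ((W ^ k') x - (Ψ ^ N) ((W ^ k') x))
              - ∑ i ∈ Finset.range N, ((W + (-(N : K)) • E) ^ k') ((Ψ ^ i) y) := by
          rw [e1, e2, map_sub, map_sum]
          abel
        rw [e3]
        refine Submodule.sub_mem _ (htelM _ N) (Submodule.sum_mem _ fun i _ => ?_)
        rw [← Module.End.mul_apply]
        exact h1 _ _ _
      suffices hQ : ∀ t, t < k + 1 → (W ^ t) x ∈ M by exact hQ k (Nat.lt_succ_self k)
      have key2 : ∀ N : ℕ, (∑ t ∈ Finset.range (k + 1),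
          ((k + 1).choose t) • ((-(N : K)) ^ (k + 1 - t) • ((W ^ t) x))) ∈ M := by
        intro N
        have h3 := h2 N (k + 1)
        rw [hbinom _ _ x hx, Finset.sum_range_succ] at h3
        simp only [Nat.choose_self, Nat.sub_self, pow_zero, one_smul] at h3
        have h4 := Submodule.neg_mem _ h3
        simpa using h4
      intro t ht
      have hπ : ∀ f : Module.Dual K (A ⧸ M), f (M.mkQ ((W ^ t) x)) = 0 := by
        intro f
        set g : A →ₗ[K] K := f.comp M.mkQ with hgdef
        have hgM : ∀ z ∈ M, g z = 0 := by
          intro z hz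
          have : M.mkQ z = 0 := by
            rw [Submodule.mkQ_apply, Submodule.Quotient.mk_eq_zero]
            exact hz
          rw [hgdef, LinearMap.comp_apply, this, map_zero]
        have hvan : ∀ N : ℕ, ∑ s ∈ Finset.range (k + 1),
            (((k + 1).choose s : K) * (-1 : K) ^ (k + 1 - s) * g ((W ^ s) x))
              * (N : K) ^ (k + 1 - s) = 0 := by
          intro N
          have h5 : g (∑ s ∈ Finset.range (k + 1),
              ((k + 1).choose s) • ((-(N : K)) ^ (k + 1 - s) • ((W ^ s) x))) = 0 :=
            hgM _ (key2 N)
          rw [map_sum] at h5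
          rw [← h5]
          refine Finset.sum_congr rfl fun s _ => ?_
          rw [map_nsmul, map_smul, neg_pow]
          rw [nsmul_eq_mul, smul_eq_mul]
          ring
        have h6 := poly_vanish (k + 1)
          (fun s => ((k + 1).choose s : K) * (-1 : K) ^ (k + 1 - s) * g ((W ^ s) x))
          hvan t ht
        have hch : ((k + 1).choose t : K) * (-1 : K) ^ (k + 1 - t) ≠ 0 := by
          refine mul_ne_zero ?_ (pow_ne_zero _ (by norm_num))
          exact_mod_cast (Nat.choose_pos (by omega : t ≤ k + 1)).ne'
        have h7 : g ((W ^ t) x) = 0 := by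
          rcases mul_eq_zero.mp h6 with h | h
          · exact absurd h hch
          · exact h
        simpa [hgdef] using h7
      have h8 := (Module.forall_dual_apply_eq_zero_iff K (M.mkQ ((W ^ t) x))).mp hπ
      rwa [Submodule.mkQ_apply, Submodule.Quotient.mk_eq_zero] at h8
  -- Fitting decomposition on the finite-dimensional invariant subspace
  set V : Submodule K A := Submodule.span K (Set.range fun i : ℕ => (D ^ i) c) with hV
  haveI : FiniteDimensional K V := hfd
  have hDV : ∀ v ∈ V, D v ∈ V := by
    have hle : Submodule.span K (Set.range fun i : ℕ => (D ^ i) c)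
        ≤ Submodule.comap D V := by
      rw [Submodule.span_le]
      rintro _ ⟨i, rfl⟩
      simp only [SetLike.mem_coe, Submodule.mem_comap]
      have hstep : D ((D ^ i) c) = (D ^ (i + 1)) c := by
        rw [pow_succ', Module.End.mul_apply]
      rw [hstep]
      exact Submodule.subset_span ⟨i + 1, rfl⟩
    intro v hv
    exact Submodule.mem_comap.mp (hle hv)
  have hcommED : Commute E D := hED
  have hEV : ∀ v ∈ V, E v = v := by
    have hle : Submodule.span K (Set.range fun i : ℕ => (D ^ i) c)
        ≤ LinearMap.ker (E - 1) := by
      rw [Submodule.span_le]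
      rintro _ ⟨i, rfl⟩
      simp only [SetLike.mem_coe, LinearMap.mem_ker, LinearMap.sub_apply,
        Module.End.one_apply, sub_eq_zero]
      rw [← Module.End.mul_apply, (hcommED.pow_right i).eq, Module.End.mul_apply, hc]
    intro v hv
    have := hle hv
    simp only [LinearMap.mem_ker, LinearMap.sub_apply, Module.End.one_apply,
      sub_eq_zero] at this
    exact this
  set g : V →ₗ[K] V := D.restrict hDV with hgdef
  obtain ⟨d0, hd0⟩ := Filter.eventually_atTop.mp g.eventually_isCompl_ker_pow_range_pow
  set d : ℕ := max d0 1 with hdd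
  have hcompl := hd0 d (le_max_left _ _)
  have hd1 : 1 ≤ d := le_max_right _ _
  have hcV : c ∈ V := Submodule.subset_span ⟨0, by simp⟩
  obtain ⟨n, r, hn, hr, hnr⟩ :=
    Submodule.codisjoint_iff_exists_add_eq.mp hcompl.codisjoint ⟨c, hcV⟩
  obtain ⟨s, hs⟩ := hr
  have hgpow : (g ^ d) = (D ^ d).restrict (Module.End.pow_apply_mem_of_forall_mem d hDV) :=
    Module.End.pow_restrict d hDV
  have hrval : (r : A) = (D ^ d) (s : A) := by
    rw [← hs, hgpow]
    rfl
  have hrM : (r : A) ∈ M := by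
    rw [hrval]
    obtain ⟨d'', hd''⟩ : ∃ d'', d = d'' + 1 := ⟨d - 1, by omega⟩
    rw [hd'', pow_succ', Module.End.mul_apply]
    exact LinearMap.mem_range_self _ _
  have hnval : (D ^ d) (n : A) = 0 := by
    have h9 : (g ^ d) n = 0 := hn
    rw [hgpow] at h9
    exact congrArg Subtype.val h9
  have hnM : (n : A) ∈ M := by
    have := hC d (n : A) (hEV _ n.2) hnval 0
    simpa using this
  have hceq : c = (n : A) + (r : A) := by
    have := congrArg (Subtype.val) hnr
    simpa using this.symm
  rw [hceq]
  exact Submodule.add_mem _ hnM hrM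

end Abstract

/-- Let `K` be a field of characteristic zero, `A` a `K`-algebra (not
necessarily unital or commutative), and `δ` a locally finite `K`-`E`-derivation of `A`
(i.e. `δ = Id - φ` for some `K`-algebra endomorphism `φ` of `A`).  If `e` is an idempotent
of `A` lying in both the kernel and the image of `δ`, then both `eA` and `Ae` are
contained in the image of `δ`. -/
theorem image_of_locally_finite_Ederivation_contains_eA_and_Ae
    {K : Type*} [Field K] [CharZero K]
    {A : Type*} [NonUnitalRing A] [Module K A] [SMulCommClass K A A] [IsScalarTower K A A]
    (δ : A →ₗ[K] A)
    (hEder : ∃ φ : A →ₙₐ[K] A, ∀ a : A, δ a = a - φ a)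
    (hLF : ∀ a : A,
      FiniteDimensional K (Submodule.span K (Set.range fun i : ℕ => (δ ^ i) a)))
    (e : A) (hidem : e * e = e) (hker : δ e = 0) (him : e ∈ LinearMap.range δ) :
    ∀ a : A, e * a ∈ LinearMap.range δ ∧ a * e ∈ LinearMap.range δ := by
  obtain ⟨φ, hφ⟩ := hEder
  obtain ⟨b, hb⟩ := him
  set Ψ : Module.End K A := (φ : A →ₗ[K] A) with hΨdef
  have hΨ : ∀ z : A, Ψ z = φ z := fun z => rfl
  have hδ : δ = (1 : Module.End K A) - Ψ := by
    ext z
    simp only [LinearMap.sub_apply, Module.End.one_apply, hΨ]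
    exact hφ z
  have hΨmul : ∀ u v : A, Ψ (u * v) = Ψ u * Ψ v := fun u v => φ.map_mul u v
  have hΨe : Ψ e = e := by
    have h1 := hφ e
    rw [hker] at h1
    rw [hΨ]
    exact (sub_eq_zero.mp h1.symm).symm
  set w : A := e * b * e with hw
  have hew : e * w = w := by
    rw [hw, ← mul_assoc, ← mul_assoc, hidem]
  have hwe : w * e = w := by
    rw [hw, mul_assoc, hidem]
  have hΨw : Ψ w = w - e := by
    have h2 : e * (b - Ψ b) * e = e := by
      have h3 : b - Ψ b = e := by
        have h4 := hφ b
        rw [hb] at h4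
        rw [hΨ]
        exact h4.symm
      rw [h3, hidem, hidem]
    have h5 : Ψ w = e * Ψ b * e := by
      rw [hw, hΨmul, hΨmul, hΨe]
    rw [h5, hw]
    have h6 : e * (b - Ψ b) * e = e * b * e - e * Ψ b * e := by
      rw [mul_sub, sub_mul]
    rw [h6] at h2
    have h8 : e * Ψ b * e + e = e * b * e := by
      rw [add_comm]
      exact (sub_eq_iff_eq_add.mp h2).symm
    exact eq_sub_of_add_eq h8
  intro a
  constructor
  · -- e * a
    have hmain := abstract_main (K := K) (A := A) Ψ
      (LinearMap.mulLeft K e) (LinearMap.mulLeft K w)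
      (by
        ext z
        simp only [Module.End.mul_apply, LinearMap.mulLeft_apply]
        rw [hΨmul, hΨe])
      (by
        ext z
        simp only [Module.End.mul_apply, LinearMap.sub_apply, LinearMap.mulLeft_apply]
        rw [hΨmul, hΨw, sub_mul])
      (by
        ext z
        simp only [Module.End.mul_apply, LinearMap.mulLeft_apply]
        rw [← mul_assoc, hew])
      (by
        ext z
        simp only [Module.End.mul_apply, LinearMap.mulLeft_apply]
        rw [← mul_assoc, hwe])
      (e * a)
      (by
        simp only [LinearMap.mulLeft_apply]
        rw [← mul_assoc, hidem])
      (by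
        have := hLF (e * a)
        rwa [hδ] at this)
    rw [hδ]
    exact hmain
  · -- a * e
    have hmain := abstract_main (K := K) (A := A) Ψ
      (LinearMap.mulRight K e) (LinearMap.mulRight K w)
      (by
        ext z
        simp only [Module.End.mul_apply, LinearMap.mulRight_apply]
        rw [hΨmul, hΨe])
      (by
        ext z
        simp only [Module.End.mul_apply, LinearMap.sub_apply, LinearMap.mulRight_apply]
        rw [hΨmul, hΨw, mul_sub])
      (by
        ext z
        simp only [Module.End.mul_apply, LinearMap.mulRight_apply]
        rw [mul_assoc, hwe])
      (by
        ext z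
        simp only [Module.End.mul_apply, LinearMap.mulRight_apply]
        rw [mul_assoc, hew])
      (a * e)
      (by
        simp only [LinearMap.mulRight_apply]
        rw [mul_assoc, hidem])
      (by
        have := hLF (a * e)
        rwa [hδ] at this)
    rw [hδ]
    exact hmain
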